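/- Every third-order tensor M of size n1×n2×n3 over ℂ admits a t-SVD: there exist tensors U (n1×n1×n3), S (n1×n2×n3), V (n2×n2×n3) with U and V orthogonal with respect to the t-product (using conjugate tensor transpose), S f-diagonal (each frontal slice of its mode-3 DFT is a diagonal matrix with nonnegative real entries), such that M = U * S * Vᵀ'. -/

import Mathlib

open Finset Complex
open scoped ComplexOrder

/-- The root `ζ = exp(-2πi/n)` used in the mode-3 DFT. -/
noncomputable def dftRoot (n : ℕ) : ℂ := Complex.exp (-2 * Real.pi * Complex.I / n)

/-- Mode-3 DFT of a third-order tensor: `Â(i,j,ω) = ∑ k, A(i,j,k) ζ^{ωk}`. -/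
noncomputable def dft3 {n1 n2 n3 : ℕ} [NeZero n3]
    (A : Fin n1 → Fin n2 → ZMod n3 → ℂ) (i : Fin n1) (j : Fin n2) (w : ZMod n3) : ℂ :=
  ∑ k : ZMod n3, A i j k * dftRoot n3 ^ (w * k).val

/-- t-product of third-order complex tensors via circular convolution of tubes. -/
noncomputable def tProdC {n1 n2 n4 n3 : ℕ} [NeZero n3]
    (A : Fin n1 → Fin n2 → ZMod n3 → ℂ) (B : Fin n2 → Fin n4 → ZMod n3 → ℂ) :
    Fin n1 → Fin n4 → ZMod n3 → ℂ :=
  fun i j t => ∑ k : Fin n2, ∑ s : ZMod n3, A i k s * B k j (t - s)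

/-- Conjugate tensor transpose: `Aᵀ'(i,j,k) = conj (A(j,i,-k))`. -/
noncomputable def ctT {n1 n2 n3 : ℕ} (A : Fin n1 → Fin n2 → ZMod n3 → ℂ) :
    Fin n2 → Fin n1 → ZMod n3 → ℂ :=
  fun i j k => starRingEnd ℂ (A j i (-k))

/-- The identity tensor: `I(i,i,0) = 1` and zero elsewhere. -/
noncomputable def idTC (n n3 : ℕ) : Fin n → Fin n → ZMod n3 → ℂ :=
  fun i j k => if i = j ∧ k = 0 then 1 else 0

/-- A tensor `Q` is orthogonal if `Qᵀ' * Q = Q * Qᵀ' = I` in the t-product sense. -/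
noncomputable def IsOrthT {n n3 : ℕ} [NeZero n3] (Q : Fin n → Fin n → ZMod n3 → ℂ) : Prop :=
  tProdC (ctT Q) Q = idTC n n3 ∧ tProdC Q (ctT Q) = idTC n n3

/-- The `ω`-th frontal slice of the mode-3 DFT of a tensor. -/
noncomputable def sliceDFT {n1 n2 n3 : ℕ} [NeZero n3]
    (A : Fin n1 → Fin n2 → ZMod n3 → ℂ) (w : ZMod n3) : Matrix (Fin n1) (Fin n2) ℂ :=
  Matrix.of fun i j => dft3 A i j w

/-- Squared Frobenius norm of a third-order tensor. -/
noncomputable def frob2 {n1 n2 n3 : ℕ} [NeZero n3]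
    (A : Fin n1 → Fin n2 → ZMod n3 → ℂ) : ℝ :=
  ∑ i : Fin n1, ∑ j : Fin n2, ∑ k : ZMod n3, ‖A i j k‖ ^ 2

/-- Port helper: `Matrix.PosSemidef.sqrt` as defined in Mathlib of December 2024 (removed since). -/
noncomputable def Matrix.PosSemidef.sqrt {n : Type*} [Fintype n] [DecidableEq n] {𝕜 : Type*}
    [RCLike 𝕜] {A : Matrix n n 𝕜} (hA : A.PosSemidef) : Matrix n n 𝕜 :=
  (hA.1.eigenvectorUnitary : Matrix n n 𝕜) *
    Matrix.diagonal ((↑) ∘ Real.sqrt ∘ hA.1.eigenvalues) *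
    (star hA.1.eigenvectorUnitary : Matrix n n 𝕜)

/-- Nuclear norm of a matrix: sum of singular values, i.e. `Re (trace √(Mᴴ M))`. -/
noncomputable def nuclearNorm {m n : Type*} [Fintype m] [Fintype n] [DecidableEq n]
    (M : Matrix m n ℂ) : ℝ :=
  ((Matrix.posSemidef_conjTranspose_mul_self M).sqrt).trace.re
section TSVDAux1

lemma dftRoot_pow_n (n : ℕ) [NeZero n] : dftRoot n ^ n = 1 := by
  rw [dftRoot, ← Complex.exp_nat_mul]
  have hn : (n : ℂ) ≠ 0 := Nat.cast_ne_zero.2 (NeZero.ne n)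
  rw [mul_div_cancel₀ _ hn]
  have : (-2 : ℂ) * Real.pi * Complex.I = -(2 * Real.pi * Complex.I) := by ring
  rw [this, Complex.exp_neg, Complex.exp_two_pi_mul_I, inv_one]

lemma dftRoot_ne_zero (n : ℕ) : dftRoot n ≠ 0 := Complex.exp_ne_zero _

lemma dftRoot_pow_mod (n : ℕ) [NeZero n] (a : ℕ) : dftRoot n ^ (a % n) = dftRoot n ^ a := by
  conv_rhs => rw [← Nat.div_add_mod a n]
  rw [pow_add, pow_mul, dftRoot_pow_n, one_pow, one_mul]

/-- the character `e x = ζ^{x.val}` -/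
noncomputable def dftE (n : ℕ) (x : ZMod n) : ℂ := dftRoot n ^ x.val

lemma dftE_add (n : ℕ) [NeZero n] (x y : ZMod n) : dftE n (x + y) = dftE n x * dftE n y := by
  rw [dftE, dftE, dftE, ZMod.val_add, dftRoot_pow_mod, pow_add]

@[simp] lemma dftE_zero (n : ℕ) [NeZero n] : dftE n 0 = 1 := by
  simp [dftE, ZMod.val_zero]

lemma dftE_neg_mul (n : ℕ) [NeZero n] (x : ZMod n) : dftE n (-x) * dftE n x = 1 := by
  rw [← dftE_add, neg_add_cancel, dftE_zero]

lemma dftE_mul_comm (n : ℕ) [NeZero n] (x y : ZMod n) : dftE n (x * y) = dftE n x ^ y.val := by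
  rw [dftE, dftE, ZMod.val_mul, dftRoot_pow_mod, pow_mul]

lemma dftE_eq_one_iff (n : ℕ) [NeZero n] (x : ZMod n) : dftE n x = 1 ↔ x = 0 := by
  constructor
  · intro h
    have hprim : IsPrimitiveRoot (Complex.exp (2 * Real.pi * Complex.I / n)) n :=
      Complex.isPrimitiveRoot_exp n (NeZero.ne n)
    have hconj : dftRoot n = (Complex.exp (2 * Real.pi * Complex.I / n))⁻¹ := by
      rw [← Complex.exp_neg, dftRoot]; ring_nf
    have hprim' : IsPrimitiveRoot (dftRoot n) n := by rw [hconj]; exact hprim.inv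
    have := hprim'.pow_eq_one_iff_dvd x.val |>.1 h
    have hlt := ZMod.val_lt x
    have hv : x.val = 0 := Nat.eq_zero_of_dvd_of_lt this hlt
    exact (ZMod.val_eq_zero x).1 hv
  · rintro rfl; simp

lemma sum_zmod_val {n : ℕ} [NeZero n] (f : ℕ → ℂ) :
    ∑ k : ZMod n, f (ZMod.val k) = ∑ m ∈ Finset.range n, f m := by
  apply Finset.sum_nbij' (fun k => ZMod.val k) (fun m => (m : ZMod n))
  · intro k _; exact Finset.mem_range.2 (ZMod.val_lt k)
  · intro m _; exact Finset.mem_univ _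
  · intro k _; simp [ZMod.natCast_val, ZMod.cast_id]
  · intro m hm; exact ZMod.val_cast_of_lt (Finset.mem_range.1 hm)
  · intro k _; rfl

lemma dftE_orth (n : ℕ) [NeZero n] (w : ZMod n) :
    ∑ k : ZMod n, dftE n (w * k) = if w = 0 then (n : ℂ) else 0 := by
  have : ∀ k : ZMod n, dftE n (w * k) = (dftE n w) ^ (ZMod.val k) :=
    fun k => dftE_mul_comm n w k
  simp_rw [this]
  rw [sum_zmod_val (fun m => dftE n w ^ m)]
  by_cases hw : w = 0
  · simp [hw, dftE_eq_one_iff n (0 : ZMod n) |>.2 rfl]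
  · rw [if_neg hw]
    have hne : dftE n w ≠ 1 := fun h => hw ((dftE_eq_one_iff n w).1 h)
    rw [geom_sum_eq hne]
    have : dftE n w ^ n = 1 := by
      rw [dftE, ← pow_mul, mul_comm, pow_mul, dftRoot_pow_n, one_pow]
    rw [this, sub_self, zero_div]


noncomputable def idft3 {n1 n2 n3 : ℕ} [NeZero n3]
    (F : Fin n1 → Fin n2 → ZMod n3 → ℂ) : Fin n1 → Fin n2 → ZMod n3 → ℂ :=
  fun i j k => (n3 : ℂ)⁻¹ * ∑ w : ZMod n3, F i j w * dftE n3 (-(w * k))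

lemma dft3_eq {n1 n2 n3 : ℕ} [NeZero n3] (A : Fin n1 → Fin n2 → ZMod n3 → ℂ)
    (i : Fin n1) (j : Fin n2) (w : ZMod n3) :
    dft3 A i j w = ∑ k : ZMod n3, A i j k * dftE n3 (w * k) := rfl

lemma dft3_idft3 {n1 n2 n3 : ℕ} [NeZero n3] (F : Fin n1 → Fin n2 → ZMod n3 → ℂ)
    (i : Fin n1) (j : Fin n2) (w : ZMod n3) : dft3 (idft3 F) i j w = F i j w := by
  have hn : (n3 : ℂ) ≠ 0 := Nat.cast_ne_zero.2 (NeZero.ne n3)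
  simp only [dft3_eq, idft3]
  have step1 : ∑ k : ZMod n3, ((n3 : ℂ)⁻¹ * ∑ w' : ZMod n3, F i j w' * dftE n3 (-(w' * k)))
        * dftE n3 (w * k)
      = ∑ w' : ZMod n3, ∑ k : ZMod n3, (n3 : ℂ)⁻¹ * F i j w' * dftE n3 ((w - w') * k) := by
    rw [Finset.sum_comm]
    congr 1; ext k
    rw [Finset.mul_sum, Finset.sum_mul]
    congr 1; ext w'
    have : dftE n3 ((w - w') * k) = dftE n3 (-(w' * k)) * dftE n3 (w * k) := by
      rw [← dftE_add]; ring_nf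
    rw [this]; ring
  rw [step1]
  have step2 : ∀ w' : ZMod n3, ∑ k : ZMod n3, (n3 : ℂ)⁻¹ * F i j w' * dftE n3 ((w - w') * k)
      = (n3 : ℂ)⁻¹ * F i j w' * if w - w' = 0 then (n3 : ℂ) else 0 := by
    intro w'; rw [← Finset.mul_sum, dftE_orth]
  simp_rw [step2, sub_eq_zero, mul_ite, mul_zero]
  rw [Finset.sum_ite_eq]
  simp only [Finset.mem_univ, if_true]
  field_simp

lemma idft3_dft3 {n1 n2 n3 : ℕ} [NeZero n3] (A : Fin n1 → Fin n2 → ZMod n3 → ℂ) :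
    idft3 (dft3 A) = A := by
  have hn : (n3 : ℂ) ≠ 0 := Nat.cast_ne_zero.2 (NeZero.ne n3)
  funext i j k
  simp only [idft3, dft3_eq]
  have step1 : ∑ w : ZMod n3, (∑ k' : ZMod n3, A i j k' * dftE n3 (w * k')) * dftE n3 (-(w * k))
      = ∑ k' : ZMod n3, ∑ w : ZMod n3, A i j k' * dftE n3 ((k' - k) * w) := by
    rw [Finset.sum_comm]
    congr 1; ext w
    rw [Finset.sum_mul]
    congr 1; ext k'
    have : dftE n3 ((k' - k) * w) = dftE n3 (w * k') * dftE n3 (-(w * k)) := by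
      rw [← dftE_add]; ring_nf
    rw [this]; ring
  rw [step1]
  have step2 : ∀ k' : ZMod n3, ∑ w : ZMod n3, A i j k' * dftE n3 ((k' - k) * w)
      = A i j k' * if k' - k = 0 then (n3 : ℂ) else 0 := by
    intro k'; rw [← Finset.mul_sum, dftE_orth]
  simp_rw [step2, sub_eq_zero, mul_ite, mul_zero]
  rw [Finset.sum_ite_eq']
  simp only [Finset.mem_univ, if_true]
  field_simp




lemma dftE_conj (n : ℕ) [NeZero n] (x : ZMod n) :
    starRingEnd ℂ (dftE n x) = dftE n (-x) := by
  have h1 : starRingEnd ℂ (dftE n x) * dftE n x = 1 := by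
    rw [dftE]
    rw [map_pow]
    have : starRingEnd ℂ (dftRoot n) * dftRoot n = 1 := by
      rw [dftRoot, ← Complex.exp_conj]
      rw [← Complex.exp_add]
      have : starRingEnd ℂ (-2 * Real.pi * Complex.I / n) = -(-2 * Real.pi * Complex.I / n) := by
        simp only [map_div₀, map_mul, map_neg, map_ofNat, Complex.conj_I,
          Complex.conj_ofReal, map_natCast]
        ring
      rw [this, neg_add_cancel, Complex.exp_zero]
    rw [← mul_pow, this, one_pow]
  have h2 := dftE_neg_mul n x
  exact (eq_inv_of_mul_eq_one_left h1).trans (eq_inv_of_mul_eq_one_left h2).symm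

/-- Convolution theorem. -/
lemma dft3_tProdC {n1 n2 n4 n3 : ℕ} [NeZero n3]
    (A : Fin n1 → Fin n2 → ZMod n3 → ℂ) (B : Fin n2 → Fin n4 → ZMod n3 → ℂ)
    (i : Fin n1) (j : Fin n4) (w : ZMod n3) :
    dft3 (tProdC A B) i j w = ∑ k : Fin n2, dft3 A i k w * dft3 B k j w := by
  simp only [dft3_eq, tProdC]
  simp_rw [Finset.sum_mul]
  rw [Finset.sum_comm]
  congr 1; ext k
  rw [Finset.sum_comm]
  congr 1; ext s
  rw [Finset.mul_sum]
  refine (Fintype.sum_equiv (Equiv.addRight s) _ _ (fun t' => ?_)).symm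
  simp only [Equiv.coe_addRight, add_sub_cancel_right]
  rw [mul_add, dftE_add]
  ring

/-- DFT of conjugate transpose. -/
lemma dft3_ctT {n1 n2 n3 : ℕ} [NeZero n3] (A : Fin n1 → Fin n2 → ZMod n3 → ℂ)
    (i : Fin n2) (j : Fin n1) (w : ZMod n3) :
    dft3 (ctT A) i j w = starRingEnd ℂ (dft3 A j i w) := by
  simp only [dft3_eq, ctT]
  rw [map_sum]
  refine Fintype.sum_equiv (Equiv.neg (ZMod n3)) _ _ (fun k => ?_)
  simp only [Equiv.neg_apply, map_mul, dftE_conj, neg_neg]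
  congr 1
  rw [mul_neg, neg_neg]

lemma dft3_idTC {n n3 : ℕ} [NeZero n3] (i j : Fin n) (w : ZMod n3) :
    dft3 (idTC n n3) i j w = if i = j then 1 else 0 := by
  simp only [dft3_eq, idTC]
  by_cases h : i = j
  · subst h
    simp only [true_and, if_pos rfl]
    rw [Finset.sum_eq_single 0]
    · simp [dftE_zero]
    · intro k _ hk; simp [hk]
    · intro h; exact absurd (Finset.mem_univ 0) h
  · simp [h]



end TSVDAux1

section TSVDAux2
open Matrix

lemma matrix_svd {m n : ℕ} (A : Matrix (Fin m) (Fin n) ℂ) :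
    ∃ (U : Matrix (Fin m) (Fin m) ℂ) (S : Matrix (Fin m) (Fin n) ℂ)
      (V : Matrix (Fin n) (Fin n) ℂ),
      Uᴴ * U = 1 ∧ U * Uᴴ = 1 ∧ Vᴴ * V = 1 ∧ V * Vᴴ = 1 ∧
      (∀ (i : Fin m) (j : Fin n), (i : ℕ) ≠ (j : ℕ) → S i j = 0) ∧
      (∀ (i : Fin m) (j : Fin n), (i : ℕ) = (j : ℕ) → (S i j).im = 0 ∧ 0 ≤ (S i j).re) ∧
      A = U * S * Vᴴ := by
  classical
  set H := Aᴴ * A with hHdef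
  have hPSD : H.PosSemidef := Matrix.posSemidef_conjTranspose_mul_self A
  have hH : H.IsHermitian := hPSD.1
  set μ : Fin n → ℝ := hH.eigenvalues with hμdef
  have hμ0 : ∀ j, 0 ≤ μ j := fun j => hPSD.eigenvalues_nonneg j
  set p : Equiv.Perm (Fin n) := Tuple.sort (fun j => -μ j) with hpdef
  have hsorted : Monotone ((fun j => -μ j) ∘ p) := Tuple.monotone_sort _
  -- nonzero eigenvalues (after sorting) sit at indices < m
  have hkey : ∀ j : Fin n, μ (p j) ≠ 0 → (j : ℕ) < m := by
    intro j hj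
    have hrank : Fintype.card {i // μ i ≠ 0} ≤ m := by
      rw [← hH.rank_eq_card_non_zero_eigs]
      calc H.rank ≤ A.rank := by
            rw [hHdef, Matrix.rank_conjTranspose_mul_self]
        _ ≤ Fintype.card (Fin m) := A.rank_le_card_height
        _ = m := Fintype.card_fin m
    have hinj : Function.Injective
        (fun l : Fin (j.val + 1) => p ⟨l.val, lt_of_le_of_lt (Nat.lt_succ_iff.1 l.isLt) j.isLt⟩) := by
      intro a b hab
      have h2 := congrArg Fin.val (p.injective hab)
      simp only [] at h2
      exact Fin.ext h2
    have hmem : ∀ l : Fin (j.val + 1),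
        μ (p ⟨l.val, lt_of_le_of_lt (Nat.lt_succ_iff.1 l.isLt) j.isLt⟩) ≠ 0 := by
      intro l
      set l' : Fin n := ⟨l.val, lt_of_le_of_lt (Nat.lt_succ_iff.1 l.isLt) j.isLt⟩
      have hle : l' ≤ j := Nat.lt_succ_iff.1 l.isLt
      have := hsorted hle
      simp only [Function.comp_apply, neg_le_neg_iff] at this
      have hpos : 0 < μ (p j) := lt_of_le_of_ne (hμ0 _) (Ne.symm hj)
      exact ne_of_gt (lt_of_lt_of_le hpos this)
    have hcard : j.val + 1 ≤ Fintype.card {i // μ i ≠ 0} := by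
      have := Fintype.card_le_of_injective
        (fun l : Fin (j.val + 1) =>
          (⟨p ⟨l.val, lt_of_le_of_lt (Nat.lt_succ_iff.1 l.isLt) j.isLt⟩, hmem l⟩ :
            {i // μ i ≠ 0}))
        (fun a b hab => hinj (Subtype.ext_iff.1 hab))
      simpa using this
    omega
  -- singular values
  set σ : Fin n → ℝ := fun j => Real.sqrt (μ (p j)) with hσdef
  have hσ0 : ∀ j, 0 ≤ σ j := fun j => Real.sqrt_nonneg _
  have hσμ : ∀ j, σ j ^ 2 = μ (p j) := fun j => Real.sq_sqrt (hμ0 _)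
  have hσne : ∀ j, σ j ≠ 0 → μ (p j) ≠ 0 := by
    intro j h h0
    exact h (by rw [hσdef]; simp [h0])
  -- V
  set W : Matrix (Fin n) (Fin n) ℂ := (hH.eigenvectorUnitary : Matrix (Fin n) (Fin n) ℂ)
    with hWdef
  have hWsW : Wᴴ * W = 1 := by
    rw [← Matrix.star_eq_conjTranspose]
    exact Unitary.coe_star_mul_self hH.eigenvectorUnitary
  have hWWs : W * Wᴴ = 1 := by
    rw [← Matrix.star_eq_conjTranspose]
    exact Unitary.coe_mul_star_self hH.eigenvectorUnitary
  set V : Matrix (Fin n) (Fin n) ℂ := W.submatrix id p with hVdef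
  have hVsV : Vᴴ * V = 1 := by
    rw [hVdef, Matrix.conjTranspose_submatrix]
    show Wᴴ.submatrix (⇑p) ⇑(Equiv.refl (Fin n)) * W.submatrix (⇑(Equiv.refl (Fin n))) ⇑p = 1
    rw [Matrix.submatrix_mul_equiv, hWsW]
    exact Matrix.submatrix_one_equiv p
  have hVVs : V * Vᴴ = 1 := by
    rw [hVdef, Matrix.conjTranspose_submatrix]
    show W.submatrix id ⇑p * Wᴴ.submatrix (⇑p) id = 1
    rw [Matrix.submatrix_mul_equiv, hWWs]
    simp [Matrix.submatrix_id_id]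
  -- columns of V
  set v : Fin n → (Fin n → ℂ) := fun j => fun i => V i j with hvdef
  have hveig : ∀ j, H *ᵥ v j = (μ (p j) : ℂ) • v j := by
    intro j
    have hcol : v j = ⇑(hH.eigenvectorBasis (p j)) := by
      funext i
      simp [hvdef, hVdef, hWdef, Matrix.submatrix_apply]
    rw [hcol]
    have := hH.mulVec_eigenvectorBasis (p j)
    rw [this]
    funext i
    simp [Pi.smul_apply, Complex.real_smul, hμdef]
  have hvnorm : ∀ j k, dotProduct (star (v j)) (v k) = if j = k then 1 else 0 := by
    intro j k
    have : (Vᴴ * V) j k = if j = k then 1 else 0 := by rw [hVsV]; simp [Matrix.one_apply]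
    rw [← this]
    simp [Matrix.mul_apply, Matrix.conjTranspose_apply, dotProduct, hvdef]
  -- cross inner products of A·v columns
  have hAvv : ∀ j k, dotProduct (star (A *ᵥ v j)) (A *ᵥ v k)
      = (μ (p k) : ℂ) * (if j = k then 1 else 0) := by
    intro j k
    rw [Matrix.star_mulVec, ← Matrix.dotProduct_mulVec, Matrix.mulVec_mulVec]
    rw [show Aᴴ * A = H from rfl, hveig k, dotProduct_smul]
    rw [hvnorm j k]
    simp [smul_eq_mul]
  have hAv0 : ∀ j, σ j = 0 → A *ᵥ v j = 0 := by
    intro j hj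
    have hμj : μ (p j) = 0 := by
      have := hσμ j
      rw [hj] at this
      simpa using this.symm
    have := hAvv j j
    rw [if_pos rfl, hμj, mul_one] at this
    exact dotProduct_star_self_eq_zero.1 (by rw [this]; simp)
  -- candidate left singular vectors
  set uf : Fin m → EuclideanSpace ℂ (Fin m) := fun i =>
    if h : (i : ℕ) < n then
      (show EuclideanSpace ℂ (Fin m) from
        WithLp.toLp 2 (fun l => ((σ ⟨(i : ℕ), h⟩ : ℂ))⁻¹ * (A *ᵥ v ⟨(i : ℕ), h⟩) l))
    else 0 with hufdef
  set sset : Set (Fin m) := {i | ∃ h : (i : ℕ) < n, σ ⟨(i : ℕ), h⟩ ≠ 0} with hssetdef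
  have huf_on : ∀ (i : Fin m) (h : (i : ℕ) < n),
      ∀ l, uf i l = ((σ ⟨(i : ℕ), h⟩ : ℂ))⁻¹ * (A *ᵥ v ⟨(i : ℕ), h⟩) l := by
    intro i h l
    simp only [hufdef, dif_pos h, WithLp.ofLp_toLp]
  have huforth : Orthonormal ℂ (sset.restrict uf) := by
    rw [orthonormal_iff_ite]
    rintro ⟨i, hi, hiσ⟩ ⟨j, hj, hjσ⟩
    rw [PiLp.inner_apply]
    simp only [RCLike.inner_apply']
    change ∑ l, (starRingEnd ℂ) ((uf i).ofLp l) * (uf j).ofLp l = _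
    set i' : Fin n := ⟨(i : ℕ), hi⟩
    set j' : Fin n := ⟨(j : ℕ), hj⟩
    have : ∀ l, (starRingEnd ℂ) (uf i l) * uf j l
        = (starRingEnd ℂ) ((σ i' : ℂ))⁻¹ * ((σ j' : ℂ))⁻¹ *
          ((starRingEnd ℂ) ((A *ᵥ v i') l) * (A *ᵥ v j') l) := by
      intro l
      rw [huf_on i hi l, huf_on j hj l, _root_.map_mul]
      ring
    simp_rw [this]
    rw [← Finset.mul_sum]
    have hdp : ∑ l, (starRingEnd ℂ) ((A *ᵥ v i') l) * (A *ᵥ v j') l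
        = dotProduct (star (A *ᵥ v i')) (A *ᵥ v j') := rfl
    rw [hdp, hAvv i' j']
    have hcj : (starRingEnd ℂ) ((σ i' : ℂ))⁻¹ = ((σ i' : ℂ))⁻¹ := by
      rw [map_inv₀, Complex.conj_ofReal]
    rw [hcj]
    by_cases hij : i' = j'
    · have hij2 : (⟨i, hi, hiσ⟩ : sset) = ⟨j, hj, hjσ⟩ := by
        have hval : (i : ℕ) = (j : ℕ) := congrArg (fun x : Fin n => x.val) hij
        have : i = j := Fin.ext hval
        simp [this]
      rw [if_pos hij, if_pos hij2, hij]
      have hσj : (σ j' : ℂ) ≠ 0 := Complex.ofReal_ne_zero.2 hjσ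
      have hμσ : (μ (p j') : ℂ) = (σ j' : ℂ) ^ 2 := by
        rw [← hσμ j']; push_cast; ring
      rw [hμσ]
      field_simp
    · have hij2 : (⟨i, hi, hiσ⟩ : sset) ≠ ⟨j, hj, hjσ⟩ := by
        intro h
        apply hij
        have : i = j := by simpa using h
        have hval : (i' : ℕ) = (j' : ℕ) := congrArg (fun x : Fin m => x.val) this
        exact Fin.ext hval
      rw [if_neg hij, if_neg hij2]
      ring
  obtain ⟨b, hb⟩ := huforth.exists_orthonormalBasis_extension_of_card_eq
    (by simp [finrank_euclideanSpace_fin])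
  set U : Matrix (Fin m) (Fin m) ℂ := Matrix.of fun i j => b j i with hUdef
  have hUsU : Uᴴ * U = 1 := by
    ext j k
    rw [Matrix.mul_apply, Matrix.one_apply]
    have : ∑ i, Uᴴ j i * U i k = ∑ i, (starRingEnd ℂ) (b j i) * b k i := by
      congr 1
    rw [this]
    have := (orthonormal_iff_ite.1 b.orthonormal) j k
    rw [PiLp.inner_apply] at this
    simp only [RCLike.inner_apply'] at this
    exact this
  have hUUs : U * Uᴴ = 1 := mul_eq_one_comm.1 hUsU
  set S : Matrix (Fin m) (Fin n) ℂ :=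
    Matrix.of fun i j => if (i : ℕ) = (j : ℕ) then (σ j : ℂ) else 0 with hSdef
  have hAV : A * V = U * S := by
    ext i j
    have hL : (A * V) i j = (A *ᵥ v j) i := by
      simp [Matrix.mul_apply, Matrix.mulVec, dotProduct, hvdef]
    rw [hL, Matrix.mul_apply]
    by_cases hσj : σ j = 0
    · have : ∀ l : Fin m, U i l * S l j = 0 := by
        intro l
        simp [hSdef, hσj]
      simp only [this, Finset.sum_const_zero]
      rw [hAv0 j hσj]
      rfl
    · have hjm : (j : ℕ) < m := hkey j (hσne j hσj)
      set l₀ : Fin m := ⟨(j : ℕ), hjm⟩ with hl₀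
      have hsum : ∑ l, U i l * S l j = U i l₀ * (σ j : ℂ) := by
        rw [Finset.sum_eq_single l₀]
        · simp [hSdef, hUdef, hl₀]
        · intro l _ hl
          have : (l : ℕ) ≠ (j : ℕ) := by
            intro h; exact hl (Fin.ext h)
          simp [hSdef, this]
        · intro h; exact absurd (Finset.mem_univ l₀) h
      rw [hsum]
      have hl₀n : ((l₀ : ℕ)) < n := j.isLt
      have hjl : (⟨(l₀ : ℕ), hl₀n⟩ : Fin n) = j := Fin.ext rfl
      have hmem : l₀ ∈ sset := ⟨hl₀n, by rw [hjl]; exact hσj⟩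
      have hbu : b l₀ = uf l₀ := hb l₀ hmem
      have hU : U i l₀ = ((σ j : ℂ))⁻¹ * (A *ᵥ v j) i := by
        rw [hUdef]
        show b l₀ i = _
        rw [hbu, huf_on l₀ hl₀n i, hjl]
      rw [hU]
      have hσjc : (σ j : ℂ) ≠ 0 := Complex.ofReal_ne_zero.2 hσj
      field_simp
  refine ⟨U, S, V, hUsU, hUUs, hVsV, hVVs, ?_, ?_, ?_⟩
  · intro i j hij
    simp [hSdef, hij]
  · intro i j hij
    simp only [hSdef, Matrix.of_apply, if_pos hij]
    exact ⟨Complex.ofReal_im _, by rw [Complex.ofReal_re]; exact hσ0 j⟩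
  · calc A = A * (V * Vᴴ) := by rw [hVVs, Matrix.mul_one]
      _ = (A * V) * Vᴴ := by rw [Matrix.mul_assoc]
      _ = U * S * Vᴴ := by rw [hAV]

lemma dft3_ext {a b c : ℕ} [NeZero c] {X Y : Fin a → Fin b → ZMod c → ℂ}
    (h : ∀ i j w, dft3 X i j w = dft3 Y i j w) : X = Y := by
  have hd : (fun i j w => dft3 X i j w) = (fun i j w => dft3 Y i j w) := by
    funext i j w; exact h i j w
  calc X = idft3 (fun i j w => dft3 X i j w) := (idft3_dft3 X).symm
    _ = idft3 (fun i j w => dft3 Y i j w) := by rw [hd]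
    _ = Y := idft3_dft3 Y

end TSVDAux2

/-- Existence of the t-SVD: every third-order tensor `M` factors as
`M = U * S * Vᵀ'` with `U`, `V` orthogonal (t-product, conjugate tensor transpose)
and `S` f-diagonal with nonnegative real Fourier-domain diagonal entries. -/
theorem tSVD_exists {n1 n2 n3 : ℕ} [NeZero n3]
    (M : Fin n1 → Fin n2 → ZMod n3 → ℂ) :
    ∃ (U : Fin n1 → Fin n1 → ZMod n3 → ℂ) (S : Fin n1 → Fin n2 → ZMod n3 → ℂ)
      (V : Fin n2 → Fin n2 → ZMod n3 → ℂ),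
      IsOrthT U ∧ IsOrthT V ∧
      (∀ (w : ZMod n3) (i : Fin n1) (j : Fin n2), (i : ℕ) ≠ (j : ℕ) → dft3 S i j w = 0) ∧
      (∀ (w : ZMod n3) (i : Fin n1) (j : Fin n2), (i : ℕ) = (j : ℕ) →
        (dft3 S i j w).im = 0 ∧ 0 ≤ (dft3 S i j w).re) ∧
      M = tProdC U (tProdC S (ctT V)) := by
  classical
  choose Um Sm Vm hU1 hU2 hV1 hV2 hSoff hSdiag hfac using
    fun w : ZMod n3 => matrix_svd (sliceDFT M w)
  refine ⟨idft3 (fun i j w => Um w i j), idft3 (fun i j w => Sm w i j),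
    idft3 (fun i j w => Vm w i j), ⟨?_, ?_⟩, ⟨?_, ?_⟩, ?_, ?_, ?_⟩
  · apply dft3_ext
    intro i j w
    rw [dft3_tProdC, dft3_idTC]
    have h := congrFun (congrFun (hU1 w) i) j
    rw [Matrix.mul_apply] at h
    simp only [Matrix.conjTranspose_apply, Matrix.one_apply] at h
    calc ∑ k, dft3 (ctT (idft3 fun i j w => Um w i j)) i k w *
          dft3 (idft3 fun i j w => Um w i j) k j w
        = ∑ k, starRingEnd ℂ (Um w k i) * Um w k j := by
          congr 1; funext k
          rw [dft3_ctT, dft3_idft3, dft3_idft3]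
      _ = if i = j then 1 else 0 := h
  · apply dft3_ext
    intro i j w
    rw [dft3_tProdC, dft3_idTC]
    have h := congrFun (congrFun (hU2 w) i) j
    rw [Matrix.mul_apply] at h
    simp only [Matrix.conjTranspose_apply, Matrix.one_apply] at h
    calc ∑ k, dft3 (idft3 fun i j w => Um w i j) i k w *
          dft3 (ctT (idft3 fun i j w => Um w i j)) k j w
        = ∑ k, Um w i k * starRingEnd ℂ (Um w j k) := by
          congr 1; funext k
          rw [dft3_ctT, dft3_idft3, dft3_idft3]
      _ = if i = j then 1 else 0 := h
  · apply dft3_ext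
    intro i j w
    rw [dft3_tProdC, dft3_idTC]
    have h := congrFun (congrFun (hV1 w) i) j
    rw [Matrix.mul_apply] at h
    simp only [Matrix.conjTranspose_apply, Matrix.one_apply] at h
    calc ∑ k, dft3 (ctT (idft3 fun i j w => Vm w i j)) i k w *
          dft3 (idft3 fun i j w => Vm w i j) k j w
        = ∑ k, starRingEnd ℂ (Vm w k i) * Vm w k j := by
          congr 1; funext k
          rw [dft3_ctT, dft3_idft3, dft3_idft3]
      _ = if i = j then 1 else 0 := h
  · apply dft3_ext
    intro i j w
    rw [dft3_tProdC, dft3_idTC]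
    have h := congrFun (congrFun (hV2 w) i) j
    rw [Matrix.mul_apply] at h
    simp only [Matrix.conjTranspose_apply, Matrix.one_apply] at h
    calc ∑ k, dft3 (idft3 fun i j w => Vm w i j) i k w *
          dft3 (ctT (idft3 fun i j w => Vm w i j)) k j w
        = ∑ k, Vm w i k * starRingEnd ℂ (Vm w j k) := by
          congr 1; funext k
          rw [dft3_ctT, dft3_idft3, dft3_idft3]
      _ = if i = j then 1 else 0 := h
  · intro w i j hij
    rw [dft3_idft3]
    exact hSoff w i j hij
  · intro w i j hij
    rw [dft3_idft3]
    exact hSdiag w i j hij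
  · apply dft3_ext
    intro i j w
    have hM : dft3 M i j w = (Um w * Sm w * (Vm w).conjTranspose) i j := by
      rw [show dft3 M i j w = sliceDFT M w i j from rfl, hfac w]
    rw [hM, dft3_tProdC, Matrix.mul_assoc, Matrix.mul_apply]
    refine Finset.sum_congr rfl fun k _ => ?_
    rw [dft3_idft3]
    congr 1
    rw [dft3_tProdC, Matrix.mul_apply]
    refine Finset.sum_congr rfl fun l _ => ?_
    rw [dft3_idft3, dft3_ctT, dft3_idft3, Matrix.conjTranspose_apply]
    rfl
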